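/- Let (f, τ, c) be degree −2 branched covering data and let X ⊆ ℂ be a continuum with f(X) = X. If Z ⊆ X is nowhere dense in the subspace topology of X, then for every n ∈ ℕ the set Z ∪ f(Z) ∪ f²(Z) ∪ … ∪ fⁿ(Z) is nowhere dense in X. -/

import Mathlib

open Set Topology

/-- A continuum: a nonempty compact connected subset of ℂ. -/
def IsContinuum (K : Set ℂ) : Prop := IsCompact K ∧ IsConnected K

/-- "Empty interior relative to X" expressed with ambient open sets. -/
def NoInt (X S : Set ℂ) : Prop :=
  ∀ U : Set ℂ, IsOpen U → (U ∩ X).Nonempty → ¬ (U ∩ X ⊆ S)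

lemma noInt_interior_empty {X S : Set ℂ} (hP : NoInt X S) :
    interior (Subtype.val ⁻¹' S : Set X) = ∅ := by
  rw [eq_empty_iff_forall_notMem]
  intro x hx
  obtain ⟨t, hts, hto, hxt⟩ := mem_interior.mp hx
  obtain ⟨U, hU, rfl⟩ := isOpen_induced_iff.mp hto
  exact hP U hU ⟨x.1, hxt, x.2⟩
    (fun y hy => hts (show (⟨y, hy.2⟩ : X) ∈ Subtype.val ⁻¹' U from hy.1))

lemma interior_empty_noInt {X S : Set ℂ}
    (h : interior (Subtype.val ⁻¹' S : Set X) = ∅) : NoInt X S := by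
  intro U hU ⟨q, hqU, hqX⟩ hsub
  have hopen : IsOpen (Subtype.val ⁻¹' U : Set X) := isOpen_induced_iff.mpr ⟨U, hU, rfl⟩
  have hmem : (⟨q, hqX⟩ : X) ∈ interior (Subtype.val ⁻¹' S : Set X) :=
    mem_interior.mpr ⟨Subtype.val ⁻¹' U,
      fun y hy => hsub ⟨hy, y.2⟩, hopen, hqU⟩
  rw [h] at hmem
  exact hmem

/-- Key step: the image under `f` of a closed set with empty relative interior
again has empty relative interior. -/
lemma key_step (f τ : ℂ → ℂ) (X N : Set ℂ)
    (hfc : Continuous f) (hτc : Continuous τ)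
    (hfX : f '' X = X)
    (hττ : ∀ x, τ (τ x) = x) (hfτ : ∀ x, f (τ x) = f x)
    (hfib : ∀ x y, f x = f y → y = x ∨ y = τ x)
    (hNX : N ⊆ X) (hNcl : IsClosed N)
    (hN : NoInt X N) : NoInt X (f '' N) := by
  intro U hU hUne hUsub
  set W := f ⁻¹' U with hW
  have hWopen : IsOpen W := hU.preimage hfc
  obtain ⟨q, hqU, hqX⟩ := hUne
  obtain ⟨x0, hx0X, hx0q⟩ : q ∈ f '' X := by rw [hfX]; exact hqX
  have hWXne : (W ∩ X).Nonempty := ⟨x0, by simp [hW, hx0q, hqU], hx0X⟩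
  -- every point of W ∩ X is in N or τ-image lands in N
  have hWsub : ∀ x, x ∈ W → x ∈ X → x ∈ N ∨ τ x ∈ N := by
    intro x hxW hxX
    have hfxX : f x ∈ X := by rw [← hfX]; exact ⟨x, hxX, rfl⟩
    obtain ⟨n, hnN, hnfx⟩ : f x ∈ f '' N := hUsub ⟨hxW, hfxX⟩
    rcases hfib x n hnfx.symm with h | h
    · exact Or.inl (h ▸ hnN)
    · exact Or.inr (h ▸ hnN)
  -- (⋆) every nonempty relatively open piece of W ∩ X meets N
  have star : ∀ B : Set ℂ, IsOpen B → B ⊆ W → (B ∩ X).Nonempty →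
      (B ∩ X ∩ N).Nonempty := by
    intro B hB hBW ⟨x', hx'B, hx'X⟩
    by_contra hempty
    rw [Set.not_nonempty_iff_eq_empty, eq_empty_iff_forall_notMem] at hempty
    have hBnoN : ∀ y, y ∈ B → y ∈ X → y ∉ N :=
      fun y h1 h2 h3 => hempty y ⟨⟨h1, h2⟩, h3⟩
    have hz : τ x' ∈ N := by
      rcases hWsub x' (hBW hx'B) hx'X with h | h
      · exact absurd h (hBnoN x' hx'B hx'X)
      · exact h
    set B' := τ ⁻¹' B with hB'
    have hB'open : IsOpen B' := hB.preimage hτc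
    have hzB' : τ x' ∈ B' := by
      show τ (τ x') ∈ B
      rw [hττ]; exact hx'B
    have hzX : τ x' ∈ X := hNX hz
    obtain ⟨y, ⟨hyB', hyX⟩, hyN⟩ : ∃ y, y ∈ B' ∩ X ∧ y ∉ N := by
      by_contra h
      push_neg at h
      exact hN B' hB'open ⟨τ x', hzB', hzX⟩ (fun y hy => h y hy)
    have hyW : y ∈ W := by
      have hτyW : τ y ∈ W := hBW hyB'
      show f y ∈ U
      rw [← hfτ y]; exact hτyW
    rcases hWsub y hyW hyX with h | h
    · exact hyN h
    · exact hBnoN (τ y) hyB' (hNX h) h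
  -- hence W ∩ X ⊆ closure N = N
  have hWN : W ∩ X ⊆ N := by
    intro x ⟨hxW, hxX⟩
    rw [← hNcl.closure_eq]
    rw [mem_closure_iff]
    intro o ho hxo
    obtain ⟨z, ⟨⟨hz1, _⟩, hz2⟩, hz3⟩ :=
      star (o ∩ W) (ho.inter hWopen) inter_subset_right ⟨x, ⟨hxo, hxW⟩, hxX⟩
    exact ⟨z, hz1, hz3⟩
  exact hN W hWopen hWXne hWN

/-- Finite unions: `NoInt` is preserved by union with a closed `NoInt` set. -/
lemma noInt_union {X A B : Set ℂ} (hAcl : IsClosed A)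
    (hA : NoInt X A) (hB : NoInt X B) : NoInt X (A ∪ B) := by
  intro U hU hUne hsub
  by_cases h : ((U \ A) ∩ X).Nonempty
  · refine hB (U \ A) (hU.sdiff hAcl) h ?_
    intro y ⟨⟨hyU, hyA⟩, hyX⟩
    rcases hsub ⟨hyU, hyX⟩ with h' | h'
    · exact absurd h' hyA
    · exact h'
  · rw [Set.not_nonempty_iff_eq_empty, eq_empty_iff_forall_notMem] at h
    refine hA U hU hUne ?_
    intro y ⟨hyU, hyX⟩
    by_contra hyA
    exact h y ⟨⟨hyU, hyA⟩, hyX⟩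

theorem union_of_iterated_images_nowhere_dense
    (f τ : ℂ → ℂ) (c : ℂ)
    (hf : Continuous f) (hopen : IsOpenMap f)
    (hperfect : ∀ K : Set ℂ, IsCompact K → IsCompact (f ⁻¹' K))
    (hτ : Continuous τ) (hττ : ∀ x, τ (τ x) = x) (hfτ : ∀ x, f (τ x) = f x)
    (hfib : ∀ x y, f x = f y → y = x ∨ y = τ x)
    (hc : τ c = c) (hcuniq : ∀ x, τ x = x → x = c)
    (X : Set ℂ) (hX : IsContinuum X) (hfX : f '' X = X)
    (Z : Set ℂ) (hZ : Z ⊆ X)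
    (hnd : IsNowhereDense (Subtype.val ⁻¹' Z : Set X)) :
    ∀ n : ℕ, IsNowhereDense
      (Subtype.val ⁻¹' (⋃ i ∈ Finset.range (n + 1), f^[i] '' Z) : Set X) := by
  have hXcl : IsClosed X := hX.1.isClosed
  set N0 := closure Z with hN0
  have hN0X : N0 ⊆ X := closure_minimal hZ hXcl
  have hN0cl : IsClosed N0 := isClosed_closure
  -- transfer hnd : closure in subtype of val⁻¹Z equals val⁻¹ N0
  have hclosure : closure (Subtype.val ⁻¹' Z : Set X) = Subtype.val ⁻¹' N0 := by
    ext x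
    rw [closure_subtype]
    have : Subtype.val '' (Subtype.val ⁻¹' Z : Set X) = Z := by
      rw [Subtype.image_preimage_coe]
      exact inter_eq_self_of_subset_right hZ
    rw [this]
    rfl
  have hP0 : NoInt X N0 := by
    apply interior_empty_noInt
    rw [← hclosure]
    exact hnd
  -- each iterate image
  have hiter : ∀ i : ℕ, IsClosed (f^[i] '' N0) ∧ f^[i] '' N0 ⊆ X ∧ NoInt X (f^[i] '' N0) := by
    intro i
    induction i with
    | zero => simpa using ⟨hN0cl, hN0X, hP0⟩
    | succ k ih =>
      obtain ⟨hkcl, hkX, hkP⟩ := ih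
      have hcomp : IsCompact (f^[k] '' N0) := by
        have hN0comp : IsCompact N0 := hX.1.of_isClosed_subset hN0cl hN0X
        exact hN0comp.image (hf.iterate k)
      have heq : f^[k+1] '' N0 = f '' (f^[k] '' N0) := by
        rw [Function.iterate_succ', Set.image_comp]
      refine ⟨?_, ?_, ?_⟩
      · rw [heq]; exact (hcomp.image hf).isClosed
      · rw [heq]
        intro y ⟨x, hx, hxy⟩
        rw [← hfX]; exact ⟨x, hkX hx, hxy⟩
      · rw [heq]
        exact key_step f τ X (f^[k] '' N0) hf hτ hfX hττ hfτ hfib hkX hkcl hkP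
  intro n
  -- the big union
  set S := ⋃ i ∈ Finset.range (n + 1), f^[i] '' N0 with hS
  have hScl : IsClosed S := by
    apply Set.Finite.isClosed_biUnion (Finset.finite_toSet _)
    intro i _
    exact (hiter i).1
  have hSP' : ∀ m : ℕ, NoInt X (⋃ i ∈ Finset.range (m + 1), f^[i] '' N0) := by
    intro m
    induction m with
    | zero => simpa using (hiter 0).2.2
    | succ m ih =>
      have : ⋃ i ∈ Finset.range (m + 1 + 1), f^[i] '' N0 =
          (⋃ i ∈ Finset.range (m + 1), f^[i] '' N0) ∪ f^[m+1] '' N0 := by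
        rw [Finset.range_add_one]
        simp [Set.biUnion_insert, Set.union_comm]
      rw [this]
      refine noInt_union ?_ ih (hiter (m+1)).2.2
      apply Set.Finite.isClosed_biUnion (Finset.finite_toSet _)
      intro i _
      exact (hiter i).1
  have hSP : NoInt X S := hSP' n
  -- conclude
  have hsub : (⋃ i ∈ Finset.range (n + 1), f^[i] '' Z) ⊆ S := by
    refine Set.iUnion₂_mono fun i _ => ?_
    exact Set.image_mono subset_closure
  show interior (closure (Subtype.val ⁻¹' (⋃ i ∈ Finset.range (n + 1), f^[i] '' Z) : Set X)) = ∅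
  have hScl' : IsClosed (Subtype.val ⁻¹' S : Set X) := hScl.preimage continuous_subtype_val
  have h1 : closure (Subtype.val ⁻¹' (⋃ i ∈ Finset.range (n + 1), f^[i] '' Z) : Set X)
      ⊆ Subtype.val ⁻¹' S :=
    closure_minimal (Set.preimage_mono hsub) hScl'
  have h2 : interior (Subtype.val ⁻¹' S : Set X) = ∅ := noInt_interior_empty hSP
  have := interior_mono h1
  rw [h2] at this
  exact eq_empty_iff_forall_notMem.mpr fun x hx => (this hx)
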